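/- For any connected weighted undirected graph G, any subset of vertices T, and any pair of vertices u, v ∈ T, the effective resistance between u and v in G equals the effective resistance between u and v in the graph whose Laplacian is the Schur complement SC(G,T) of L_G onto T. -/

import Mathlib

open Matrix BigOperators

/-- The Laplacian matrix of a weighted graph given by a weight function `w`. -/
def lap {V : Type*} [Fintype V] [DecidableEq V] (w : V → V → ℝ) : Matrix V V ℝ :=
  Matrix.diagonal (fun i => ∑ k, w i k) - Matrix.of w

/-- `B` is the Moore–Penrose pseudoinverse of `A`. -/
def IsMoorePenrose {n : Type*} [Fintype n] (A B : Matrix n n ℝ) : Prop :=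
  A * B * A = A ∧ B * A * B = B ∧ (A * B)ᵀ = A * B ∧ (B * A)ᵀ = B * A

lemma lap_transpose {V : Type*} [Fintype V] [DecidableEq V] (w : V → V → ℝ)
    (hsymm : ∀ a b, w a b = w b a) : (lap w)ᵀ = lap w := by
  ext i j
  simp only [lap, Matrix.transpose_apply, Matrix.sub_apply, Matrix.diagonal_apply,
    Matrix.of_apply]
  rw [hsymm j i]
  congr 1
  by_cases h : i = j
  · subst h; simp
  · simp [h, Ne.symm h]

lemma lap_mulVec_one {V : Type*} [Fintype V] [DecidableEq V] (w : V → V → ℝ) :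
    lap w *ᵥ (fun _ => (1:ℝ)) = 0 := by
  ext i
  simp [lap, Matrix.mulVec, dotProduct, Matrix.sub_apply, Matrix.diagonal_apply,
    Finset.sum_sub_distrib, Finset.sum_ite_eq]

lemma mp_proj {n : Type*} [Fintype n] [DecidableEq n] (M Mdag : Matrix n n ℝ)
    (hsym : Mᵀ = M) (h : IsMoorePenrose M Mdag) :
    M * (1 - M * Mdag) = 0 := by
  have h1 : (1 - M * Mdag) * M = 0 := by
    rw [sub_mul, one_mul, mul_assoc, ← mul_assoc, h.1]; simp
  have : (M * (1 - M * Mdag))ᵀ = 0 := by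
    rw [Matrix.transpose_mul, hsym, Matrix.transpose_sub, Matrix.transpose_one, h.2.2.1, h1]
  calc M * (1 - M * Mdag) = (M * (1 - M * Mdag))ᵀᵀ := by rw [Matrix.transpose_transpose]
  _ = 0 := by rw [this]; simp

lemma mp_solve {n : Type*} [Fintype n] [DecidableEq n] [Nonempty n]
    (M Mdag : Matrix n n ℝ) (hsym : Mᵀ = M) (h : IsMoorePenrose M Mdag)
    (hM1 : M *ᵥ (fun _ => (1:ℝ)) = 0)
    (hker : ∀ k : n → ℝ, M *ᵥ k = 0 → ∃ c, ∀ t, k t = c)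
    (b : n → ℝ) (hb : ∑ i, b i = 0) :
    M *ᵥ (Mdag *ᵥ b) = b := by
  have hr : b - M *ᵥ (Mdag *ᵥ b) = (1 - M * Mdag) *ᵥ b := by
    rw [Matrix.sub_mulVec, Matrix.one_mulVec, ← Matrix.mulVec_mulVec]
  have hrM : M *ᵥ (b - M *ᵥ (Mdag *ᵥ b)) = 0 := by
    rw [hr, Matrix.mulVec_mulVec, mp_proj M Mdag hsym h, Matrix.zero_mulVec]
  obtain ⟨c, hc⟩ := hker _ hrM
  have h2 : ∑ i, (M *ᵥ (Mdag *ᵥ b)) i = 0 := by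
    have e : ∑ i, (M *ᵥ (Mdag *ᵥ b)) i = (fun _ => (1:ℝ)) ⬝ᵥ (M *ᵥ (Mdag *ᵥ b)) := by
      simp [dotProduct]
    rw [e, Matrix.dotProduct_mulVec, ← Matrix.mulVec_transpose, hsym, hM1]
    simp
  have hsum : ∑ i, (b - M *ᵥ (Mdag *ᵥ b)) i = 0 := by
    simp only [Pi.sub_apply, Finset.sum_sub_distrib, hb, h2, sub_zero]
  have hc0 : c = 0 := by
    have e : ∑ i, (b - M *ᵥ (Mdag *ᵥ b)) i = (Fintype.card n : ℝ) * c := by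
      rw [Finset.sum_congr rfl (fun i _ => hc i)]
      simp [Finset.sum_const, mul_comm]
    rw [hsum] at e
    have hcard : (Fintype.card n : ℝ) ≠ 0 := by
      exact_mod_cast Fintype.card_ne_zero
    exact (mul_eq_zero.mp e.symm).resolve_left hcard
  have hz : b - M *ᵥ (Mdag *ᵥ b) = 0 := funext fun i => by rw [hc i, hc0]; rfl
  have := sub_eq_zero.mp hz
  exact this.symm

/-- the Schur complement preserves effective resistances among
terminal vertices. -/
theorem schur_complement_preserves_effective_resistance
    {F T : Type*} [Fintype F] [Fintype T] [DecidableEq F] [DecidableEq T]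
    [Nonempty T]
    (w : F ⊕ T → F ⊕ T → ℝ)
    (hsymm : ∀ a b, w a b = w b a) (hnonneg : ∀ a b, 0 ≤ w a b)
    (hconn : ∀ x : F ⊕ T → ℝ, (lap w) *ᵥ x = 0 → ∃ c, ∀ v, x v = c)
    (hFF : IsUnit ((lap w).toBlocks₁₁).det)
    (Ldag : Matrix (F ⊕ T) (F ⊕ T) ℝ) (hLdag : IsMoorePenrose (lap w) Ldag)
    (SCdag : Matrix T T ℝ)
    (hSCdag : IsMoorePenrose
      ((lap w).toBlocks₂₂ -
        (lap w).toBlocks₂₁ * ((lap w).toBlocks₁₁)⁻¹ * (lap w).toBlocks₁₂) SCdag)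
    (u v : T) :
    ((Pi.single (Sum.inr u) 1 - Pi.single (Sum.inr v) 1 : F ⊕ T → ℝ)
        ⬝ᵥ (Ldag *ᵥ (Pi.single (Sum.inr u) 1 - Pi.single (Sum.inr v) 1)))
      = ((Pi.single u 1 - Pi.single v 1 : T → ℝ)
        ⬝ᵥ (SCdag *ᵥ (Pi.single u 1 - Pi.single v 1))) := by
  set L := lap w with hLdef
  set A := L.toBlocks₁₁ with hAdef
  set B := L.toBlocks₁₂ with hBdef
  set C := L.toBlocks₂₁ with hCdef
  set D := L.toBlocks₂₂ with hDdef
  set SC := D - C * A⁻¹ * B with hSCdef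
  set bb : T → ℝ := Pi.single u 1 - Pi.single v 1 with hbbdef
  set bh : F ⊕ T → ℝ := Pi.single (Sum.inr u) 1 - Pi.single (Sum.inr v) 1 with hbhdef
  have hLsym : Lᵀ = L := lap_transpose w hsymm
  have hL1 : L *ᵥ (fun _ => (1:ℝ)) = 0 := lap_mulVec_one w
  have hE : ∀ a b, L a b = L b a := fun a b => congrFun (congrFun hLsym b) a
  have hA : Aᵀ = A := by
    ext i j; exact hE (Sum.inl j) (Sum.inl i)
  have hD : Dᵀ = D := by
    ext i j; exact hE (Sum.inr j) (Sum.inr i)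
  have hCB : Cᵀ = B := by
    ext i j; exact hE (Sum.inr j) (Sum.inl i)
  have hBC : Bᵀ = C := by rw [← hCB, Matrix.transpose_transpose]
  have hAinv : (A⁻¹)ᵀ = A⁻¹ := by
    rw [Matrix.transpose_nonsing_inv, hA]
  have hSCsym : SCᵀ = SC := by
    rw [hSCdef, Matrix.transpose_sub, Matrix.transpose_mul, Matrix.transpose_mul,
      hD, hAinv, hCB, hBC, ← Matrix.mul_assoc]
  have hAiA : A⁻¹ * A = 1 := Matrix.nonsing_inv_mul A hFF
  have hAAi : A * A⁻¹ = 1 := Matrix.mul_nonsing_inv A hFF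
  have hLblocks : L = Matrix.fromBlocks A B C D := (Matrix.fromBlocks_toBlocks L).symm
  have hmv : ∀ x : F ⊕ T → ℝ, L *ᵥ x =
      Sum.elim (A *ᵥ (x ∘ Sum.inl) + B *ᵥ (x ∘ Sum.inr))
        (C *ᵥ (x ∘ Sum.inl) + D *ᵥ (x ∘ Sum.inr)) := fun x => by
    conv_lhs => rw [hLblocks]
    exact Matrix.fromBlocks_mulVec A B C D x
  -- SC *ᵥ 1 = 0
  have h10 := (hmv (fun _ => 1)).symm.trans hL1
  have h1F : A *ᵥ (fun _ => (1:ℝ)) + B *ᵥ (fun _ => 1) = 0 := by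
    funext i
    simpa [Function.comp_def] using congrFun h10 (Sum.inl i)
  have h1T : C *ᵥ (fun _ => (1:ℝ)) + D *ᵥ (fun _ => 1) = 0 := by
    funext t
    simpa [Function.comp_def] using congrFun h10 (Sum.inr t)
  have hSCmv : ∀ z : T → ℝ, SC *ᵥ z = D *ᵥ z - C *ᵥ (A⁻¹ *ᵥ (B *ᵥ z)) := fun z => by
    rw [hSCdef, Matrix.sub_mulVec, Matrix.mulVec_mulVec, Matrix.mulVec_mulVec]
  have hSC1 : SC *ᵥ (fun _ => (1:ℝ)) = 0 := by
    have hB1 : B *ᵥ (fun _ => (1:ℝ)) = -(A *ᵥ (fun _ => 1)) :=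
      eq_neg_of_add_eq_zero_right h1F
    rw [hSCmv, hB1, Matrix.mulVec_neg, Matrix.mulVec_mulVec, hAiA, Matrix.one_mulVec,
      Matrix.mulVec_neg, sub_neg_eq_add, add_comm]
    exact h1T
  -- kernel of SC is constants
  have hker : ∀ k : T → ℝ, SC *ᵥ k = 0 → ∃ c, ∀ t, k t = c := by
    intro k hk
    have hLk : L *ᵥ (Sum.elim (-(A⁻¹ *ᵥ (B *ᵥ k))) k) = 0 := by
      rw [hmv]
      have e1 : A *ᵥ (-(A⁻¹ *ᵥ (B *ᵥ k))) + B *ᵥ k = 0 := by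
        rw [Matrix.mulVec_neg, Matrix.mulVec_mulVec, hAAi, Matrix.one_mulVec,
          neg_add_cancel]
      have e2 : C *ᵥ (-(A⁻¹ *ᵥ (B *ᵥ k))) + D *ᵥ k = 0 := by
        rw [Matrix.mulVec_neg, ← sub_eq_neg_add, ← hSCmv, hk]
      funext a
      cases a with
      | inl i => simpa [Function.comp] using congrFun e1 i
      | inr t => simpa [Function.comp] using congrFun e2 t
    obtain ⟨c, hc⟩ := hconn _ hLk
    exact ⟨c, fun t => hc (Sum.inr t)⟩
  -- sums
  have hsumbb : ∑ t, bb t = 0 := by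
    simp [hbbdef, Finset.sum_sub_distrib, Finset.sum_pi_single]
  have hsumbh : ∑ a, bh a = 0 := by
    simp [hbhdef, Finset.sum_sub_distrib, Finset.sum_pi_single]
  -- solve L x = bh
  have hx : L *ᵥ (Ldag *ᵥ bh) = bh :=
    mp_solve L Ldag hLsym hLdag hL1 hconn bh hsumbh
  set x : F ⊕ T → ℝ := Ldag *ᵥ bh with hxdef
  set xF : F → ℝ := x ∘ Sum.inl with hxF
  set xT : T → ℝ := x ∘ Sum.inr with hxT
  have hbhelim : bh = Sum.elim (0 : F → ℝ) bb := by
    funext a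
    cases a with
    | inl i => simp [hbhdef, hbbdef, Pi.single_apply]
    | inr t => simp [hbhdef, hbbdef, Pi.single_apply]
  have hxblocks := (hmv x).symm.trans hx
  have e1 : A *ᵥ xF + B *ᵥ xT = 0 := by
    funext i
    have := congrFun hxblocks (Sum.inl i)
    rw [hbhelim] at this
    simpa [Function.comp] using this
  have e2 : C *ᵥ xF + D *ᵥ xT = bb := by
    funext t
    have := congrFun hxblocks (Sum.inr t)
    rw [hbhelim] at this
    simpa [Function.comp] using this
  have hxFeq : xF = -(A⁻¹ *ᵥ (B *ᵥ xT)) := by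
    have : A *ᵥ xF = -(B *ᵥ xT) := eq_neg_of_add_eq_zero_left e1
    calc xF = (A⁻¹ * A) *ᵥ xF := by rw [hAiA, Matrix.one_mulVec]
    _ = A⁻¹ *ᵥ (A *ᵥ xF) := by rw [Matrix.mulVec_mulVec]
    _ = -(A⁻¹ *ᵥ (B *ᵥ xT)) := by rw [this, Matrix.mulVec_neg]
  have hSCx : SC *ᵥ xT = bb := by
    have hnn : A⁻¹ *ᵥ (B *ᵥ xT) = -xF := by rw [hxFeq, neg_neg]
    rw [hSCmv, hnn, Matrix.mulVec_neg, sub_neg_eq_add, add_comm]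
    exact e2
  have hy : SC *ᵥ (SCdag *ᵥ bb) = bb :=
    mp_solve SC SCdag hSCsym hSCdag hSC1 hker bb hsumbb
  set y : T → ℝ := SCdag *ᵥ bb with hydef
  have hdiff : SC *ᵥ (xT - y) = 0 := by
    rw [Matrix.mulVec_sub, hSCx, hy, sub_self]
  obtain ⟨c, hc⟩ := hker _ hdiff
  have hfin : bb ⬝ᵥ xT - bb ⬝ᵥ y = 0 := by
    rw [← dotProduct_sub]
    have : ∀ t ∈ Finset.univ, bb t * (xT - y) t = bb t * c :=
      fun t _ => by rw [hc t]
    calc bb ⬝ᵥ (xT - y) = ∑ t, bb t * (xT - y) t := rfl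
    _ = ∑ t, bb t * c := Finset.sum_congr rfl this
    _ = (∑ t, bb t) * c := by rw [Finset.sum_mul]
    _ = 0 := by rw [hsumbb, zero_mul]
  have hlhs : bh ⬝ᵥ x = bb ⬝ᵥ xT := by
    rw [hbhelim]
    simp [dotProduct, Fintype.sum_sum_type, hxT, Function.comp]
  rw [hlhs]
  linarith
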